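/- For every even μ ≥ 2, the set F_2^μ \ {0} can be partitioned into (2^μ − 1)/3 disjoint triples {A, B, C} of distinct nonzero vectors with A + B + C = 0. -/

import Mathlib

open Finset

/-- For even `μ ≥ 2`, the nonzero vectors of `F_2^μ` can be partitioned into
`(2^μ - 1)/3` disjoint triples of distinct nonzero vectors summing to zero. -/
theorem partition_into_zero_sum_triples_even (μ : ℕ) (hμ : 2 ≤ μ) (he : Even μ) :
    ∃ T : Finset (Finset (Fin μ → ZMod 2)),
      T.card = (2 ^ μ - 1) / 3 ∧
      (∀ s ∈ T, s.card = 3 ∧ (0 : Fin μ → ZMod 2) ∉ s ∧ ∑ x ∈ s, x = 0) ∧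
      (T : Set (Finset (Fin μ → ZMod 2))).PairwiseDisjoint id ∧
      T.sup id = Finset.univ.erase (0 : Fin μ → ZMod 2) := by
  classical
  haveI : Fact (Nat.Prime 2) := ⟨Nat.prime_two⟩
  set V := Fin μ → ZMod 2
  set K := GaloisField 2 μ with hK
  haveI : Fintype K := Fintype.ofFinite K
  have hμ0 : μ ≠ 0 := by omega
  have hcardK : Fintype.card K = 2 ^ μ := by
    have := GaloisField.card 2 μ hμ0
    rwa [Nat.card_eq_fintype_card] at this
  -- 3 divides 2^μ - 1
  have hdvd : 3 ∣ 2 ^ μ - 1 := by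
    obtain ⟨k, hk⟩ := he
    have : (4 : ℕ) - 1 ∣ 4 ^ k - 1 ^ k := Nat.sub_dvd_pow_sub_pow 4 1 k
    simpa [hk, pow_add, ← two_mul, pow_mul, one_pow] using this
  -- an element ω of order 3
  have hcardU : Fintype.card Kˣ = 2 ^ μ - 1 := by
    rw [Fintype.card_units, hcardK]
  obtain ⟨u, hu⟩ := exists_prime_orderOf_dvd_card (G := Kˣ) 3 (by rw [hcardU]; exact hdvd)
  set ω : K := (u : K) with hω
  have hω3 : ω ^ 3 = 1 := by
    have h1 : u ^ 3 = 1 := by rw [← hu]; exact pow_orderOf_eq_one u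
    have : ((u ^ 3 : Kˣ) : K) = ((1 : Kˣ) : K) := by rw [h1]
    simpa [hω] using this
  have hω1 : ω ≠ 1 := by
    intro h
    have : u = 1 := Units.ext h
    rw [this, orderOf_one] at hu; omega
  have hω0 : ω ≠ 0 := u.ne_zero
  have h2K : (2 : K) = 0 := by
    have := CharP.cast_eq_zero K 2
    simpa using this
  have hsum : 1 + ω + ω ^ 2 = 0 := by
    have h : (ω - 1) * (1 + ω + ω ^ 2) = 0 := by linear_combination hω3
    rcases mul_eq_zero.1 h with h | h
    · exact absurd (sub_eq_zero.1 h) hω1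
    · exact h
  have hω21 : ω ^ 2 ≠ 1 := by
    intro h
    have hsq : (ω - 1) ^ 2 = 0 := by linear_combination h + (1 - ω) * h2K
    exact hω1 (sub_eq_zero.1 ((pow_eq_zero_iff (two_ne_zero)).1 hsq))
  have hω2ω : ω ^ 2 ≠ ω := by
    intro h
    exact hω1 (mul_left_cancel₀ hω0 (by rw [mul_one, ← sq, h]))
  -- linear equivalence K ≃ V
  have hfr : Module.finrank (ZMod 2) K = Module.finrank (ZMod 2) V := by
    rw [GaloisField.finrank 2 hμ0]
    simp [V]
  obtain ⟨e⟩ := FiniteDimensional.nonempty_linearEquiv_of_finrank_eq hfr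
  have einj : Function.Injective e := e.injective
  -- triples
  set t : K → Finset V := fun x => {e x, e (ω * x), e (ω ^ 2 * x)} with ht
  -- distinctness inside a triple
  have hdist : ∀ x : K, x ≠ 0 →
      e x ≠ e (ω * x) ∧ e x ≠ e (ω ^ 2 * x) ∧ e (ω * x) ≠ e (ω ^ 2 * x) := by
    intro x hx
    refine ⟨fun h => ?_, fun h => ?_, fun h => ?_⟩
    · have hh := einj h
      have : (ω - 1) * x = 0 := by linear_combination -hh
      rcases mul_eq_zero.1 this with h' | h'
      · exact hω1 (sub_eq_zero.1 h')
      · exact hx h'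
    · have hh := einj h
      have : (ω ^ 2 - 1) * x = 0 := by linear_combination -hh
      rcases mul_eq_zero.1 this with h' | h'
      · exact hω21 (sub_eq_zero.1 h')
      · exact hx h'
    · have hh := einj h
      have : (ω ^ 2 - ω) * x = 0 := by linear_combination -hh
      rcases mul_eq_zero.1 this with h' | h'
      · exact hω2ω (sub_eq_zero.1 h')
      · exact hx h'
  have hmem : ∀ (x : K) (v : V), v ∈ t x ↔ v = e x ∨ v = e (ω * x) ∨ v = e (ω ^ 2 * x) := by
    intro x v; simp [ht]
  -- shifting by ω preserves triples
  have hshift1 : ∀ x : K, t (ω * x) = t x := by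
    intro x
    have k1 : ω * (ω * x) = ω ^ 2 * x := by ring
    have k2 : ω ^ 2 * (ω * x) = x := by linear_combination x * hω3
    ext v
    rw [hmem, hmem, k1, k2]
    exact ⟨fun h => h.elim (fun h => Or.inr (Or.inl h)) (fun h => h.elim (fun h => Or.inr (Or.inr h)) Or.inl),
      fun h => h.elim (fun h => Or.inr (Or.inr h)) (fun h => h.elim Or.inl (fun h => Or.inr (Or.inl h)))⟩
  have hshiftpow : ∀ (y : K) (k : ℕ), t (ω ^ k * y) = t y := by
    intro y k
    induction k with
    | zero => simp
    | succ n ih =>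
      rw [pow_succ, mul_comm (ω ^ n) ω, mul_assoc, hshift1, ih]
  have hmem' : ∀ (x : K) (v : V), v ∈ t x → ∃ i : ℕ, v = e (ω ^ i * x) := by
    intro x v hv
    rw [hmem] at hv
    rcases hv with h | h | h
    · exact ⟨0, by simpa using h⟩
    · exact ⟨1, by simpa using h⟩
    · exact ⟨2, h⟩
  -- key: overlapping triples coincide
  have hkey : ∀ (x y : K) (v : V), v ∈ t x → v ∈ t y → t x = t y := by
    intro x y v hvx hvy
    obtain ⟨i, rfl⟩ := hmem' x v hvx
    obtain ⟨j, hj⟩ := hmem' y _ hvy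
    have heq : ω ^ i * x = ω ^ j * y := einj hj
    have hx' : ω ^ (2 * i + j) * y = x := by
      calc ω ^ (2 * i + j) * y = ω ^ (2 * i) * (ω ^ j * y) := by rw [pow_add, mul_assoc]
        _ = ω ^ (2 * i) * (ω ^ i * x) := by rw [← heq]
        _ = ω ^ (3 * i) * x := by rw [← mul_assoc, ← pow_add]; ring_nf
        _ = x := by rw [pow_mul, hω3, one_pow, one_mul]
    rw [← hx', hshiftpow]
  -- the partition
  set T : Finset (Finset V) := (Finset.univ.filter (· ≠ (0 : K))).image t with hT
  have hT0 : ∀ x : K, x ≠ 0 → (0 : V) ∉ t x := by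
    intro x hx
    simp only [ht, Finset.mem_insert, Finset.mem_singleton]
    push_neg
    refine ⟨?_, ?_, ?_⟩ <;> intro h <;>
      rw [eq_comm, LinearEquiv.map_eq_zero_iff] at h
    · exact hx h
    · rcases mul_eq_zero.1 h with h | h
      · exact hω0 h
      · exact hx h
    · rcases mul_eq_zero.1 h with h | h
      · exact hω0 (pow_eq_zero_iff two_ne_zero |>.1 h)
      · exact hx h
  have hTprop : ∀ s ∈ T, s.card = 3 ∧ (0 : V) ∉ s ∧ ∑ x ∈ s, x = 0 := by
    intro s hs
    rw [hT, Finset.mem_image] at hs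
    obtain ⟨x, hx, rfl⟩ := hs
    rw [Finset.mem_filter] at hx
    have hx0 : x ≠ 0 := hx.2
    obtain ⟨d1, d2, d3⟩ := hdist x hx0
    refine ⟨?_, hT0 x hx0, ?_⟩
    · rw [ht]
      rw [Finset.card_insert_of_notMem (by simp [d1, d2]), Finset.card_pair d3]
    · rw [ht]
      rw [Finset.sum_insert (by simp [d1, d2]), Finset.sum_pair d3,
        ← map_add, ← map_add, LinearEquiv.map_eq_zero_iff]
      linear_combination x * hsum
  have hdisj : (T : Set (Finset V)).PairwiseDisjoint id := by
    intro s hs s' hs' hne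
    rw [Finset.mem_coe, hT, Finset.mem_image] at hs hs'
    obtain ⟨x, _, rfl⟩ := hs
    obtain ⟨y, _, rfl⟩ := hs'
    show Disjoint (t x) (t y)
    rw [Finset.disjoint_left]
    intro v hv hv'
    exact hne (hkey x y v hv hv')
  have hsup : T.sup id = Finset.univ.erase (0 : V) := by
    ext v
    rw [Finset.mem_sup, Finset.mem_erase]
    constructor
    · rintro ⟨s, hs, hvs⟩
      refine ⟨?_, Finset.mem_univ v⟩
      intro h
      exact (hTprop s hs).2.1 (h ▸ hvs)
    · rintro ⟨hv, -⟩
      refine ⟨t (e.symm v), ?_, ?_⟩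
      · rw [hT, Finset.mem_image]
        exact ⟨e.symm v, Finset.mem_filter.2 ⟨Finset.mem_univ _, by
          simpa [LinearEquiv.map_eq_zero_iff] using hv⟩, rfl⟩
      · show v ∈ t (e.symm v)
        rw [hmem]
        left
        simp
  have hcardV : Fintype.card V = 2 ^ μ := by
    simp [V]
  have hcount : 3 * T.card = 2 ^ μ - 1 := by
    have h1 : T.biUnion id = T.sup id := (Finset.sup_eq_biUnion T id).symm
    have h2 : (T.biUnion id).card = ∑ s ∈ T, s.card :=
      Finset.card_biUnion (fun s hs s' hs' hne => hdisj hs hs' hne)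
    have h3 : ∑ s ∈ T, s.card = 3 * T.card := by
      rw [Finset.sum_congr rfl (fun s hs => (hTprop s hs).1), Finset.sum_const,
        smul_eq_mul, mul_comm]
    have h4 : (Finset.univ.erase (0 : V)).card = 2 ^ μ - 1 := by
      rw [Finset.card_erase_of_mem (Finset.mem_univ _), Finset.card_univ, hcardV]
    rw [← h3, ← h2, h1, hsup, h4]
  refine ⟨T, ?_, hTprop, hdisj, hsup⟩
  omega
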